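/- In the heteroscedastic model with product weights, E_RE(Ṽar_PW(X̄*)) = (1/N)∑_{u≠∅}∑_i γ_{i,u} σ²_{i,u}, where γ_{i,u} = ∑_{k=0}^r (1+τ²)^k ( ν_{i,k,u} − 2ν_{i,k}ν_{i,u} + \overline{ν_k} ν_{i,u} ). -/

import Mathlib

open scoped BigOperators

lemma Esum' {Ω : Type*} (E : (Ω → ℝ) →ₗ[ℝ] ℝ) {α : Type*} (s : Finset α)
    (g : α → Ω → ℝ) :
    E (fun ω => ∑ a ∈ s, g a ω) = ∑ a ∈ s, E (g a) := by
  rw [show (fun ω => ∑ a ∈ s, g a ω) = ∑ a ∈ s, g a from by funext ω; simp]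
  exact map_sum E g s

lemma Esmul' {Ω : Type*} (E : (Ω → ℝ) →ₗ[ℝ] ℝ) (c : ℝ) (g : Ω → ℝ) :
    E (fun ω => c * g ω) = c * E g := by
  have h : (fun ω => c * g ω) = c • g := rfl
  rw [h, map_smul, smul_eq_mul]

/-- Theorem 8 (heteroscedastic, product weights):
`E_RE(Ṽar_PW(X̄*)) = (1/N) ∑_{u≠∅} ∑_i γ_{i,u} σ²_{i,u}` (sum over observed `i`),
with `γ_{i,u} = ∑_{k=0}^r (1+τ²)^k (ν_{i,k,u} − 2ν_{i,k}ν_{i,u} + ν̄_k ν_{i,u})`. -/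
theorem stmt18 {r : ℕ} (hr : 1 ≤ r) {Ω : Type*}
    (E : (Ω → ℝ) →ₗ[ℝ] ℝ) (hE1 : E (fun _ => 1) = 1)
    (Z : (Fin r → ℕ) → ℝ)
    (hZ01 : ∀ i, Z i = 0 ∨ Z i = 1)
    (hZfin : (Function.support Z).Finite)
    (N : ℝ) (hN : N = ∑ᶠ i, Z i) (hNpos : 0 < N)
    (μ : ℝ) (σ2 : (Fin r → ℕ) → Finset (Fin r) → ℝ) (τ2 : ℝ)
    (ε : (Fin r → ℕ) → Finset (Fin r) → Ω → ℝ)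
    (hdep : ∀ i i' u, (∀ j ∈ u, i j = i' j) → ε i u = ε i' u)
    (hσdep : ∀ i i' u, (∀ j ∈ u, i j = i' j) → σ2 i u = σ2 i' u)
    (hmean : ∀ i u, u.Nonempty → E (ε i u) = 0)
    (hcov : ∀ i i' u u', u.Nonempty → u'.Nonempty →
      E (fun ω => ε i u ω * ε i' u' ω)
        = σ2 i u * (if u = u' ∧ ∀ j ∈ u, i j = i' j then (1 : ℝ) else 0))
    (X : (Fin r → ℕ) → Ω → ℝ)
    (hX : ∀ i ω, X i ω = μ + ∑ u ∈ Finset.univ.erase (∅ : Finset (Fin r)), ε i u ω)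
    (Xbar : Ω → ℝ)
    (hXbar : ∀ ω, Xbar ω = (1 / N) * ∑ᶠ i, Z i * X i ω)
    (νiu : (Fin r → ℕ) → Finset (Fin r) → ℝ)
    (hνiu : ∀ i u, νiu i u
      = (1 / N) * ∑ᶠ i', Z i' * (if ∀ j ∈ u, i j = i' j then (1 : ℝ) else 0))
    (νik : (Fin r → ℕ) → ℕ → ℝ)
    (hνik : ∀ i k, νik i k
      = (1 / N) * ∑ᶠ i', Z i' *
          (if (Finset.univ.filter (fun j => i j = i' j)).card = k then (1 : ℝ) else 0))
    (νiku : (Fin r → ℕ) → ℕ → Finset (Fin r) → ℝ)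
    (hνiku : ∀ i k u, νiku i k u
      = (1 / N) * ∑ᶠ i', Z i' *
          (if (Finset.univ.filter (fun j => i j = i' j)).card = k ∧ ∀ j ∈ u, i j = i' j
            then (1 : ℝ) else 0))
    (νkbar : ℕ → ℝ)
    (hνkbar : ∀ k, νkbar k = (1 / N) * ∑ᶠ i, Z i * νik i k)
    (γi : (Fin r → ℕ) → Finset (Fin r) → ℝ)
    (hγi : ∀ i u, γi i u = ∑ k ∈ Finset.range (r + 1),
      (1 + τ2) ^ k * (νiku i k u - 2 * νik i k * νiu i u + νkbar k * νiu i u)) :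
    (1 / N ^ 2) * E (fun ω => ∑ᶠ i, ∑ᶠ i', Z i * Z i' *
        (1 + τ2) ^ (Finset.univ.filter (fun j => i j = i' j)).card *
        ((X i ω - Xbar ω) * (X i' ω - Xbar ω)))
      = (1 / N) * ∑ u ∈ Finset.univ.erase (∅ : Finset (Fin r)),
          ∑ᶠ i, Z i * (γi i u * σ2 i u) := by
  have hNne : N ≠ 0 := ne_of_gt hNpos
  set S : Finset (Fin r → ℕ) := hZfin.toFinset with hSdef
  have hZ0 : ∀ i, i ∉ S → Z i = 0 := by
    intro i hi
    by_contra h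
    exact hi (hZfin.mem_toFinset.mpr h)
  have fs2 : ∀ (f : (Fin r → ℕ) → ℝ), (∀ i, Z i = 0 → f i = 0) →
      ∑ᶠ i, f i = ∑ i ∈ S, f i := by
    intro f hf
    apply finsum_eq_finset_sum_of_support_subset
    intro i hi
    simp only [Function.mem_support] at hi
    simp only [Finset.coe_sort_coe, Finset.mem_coe, hSdef, Set.Finite.coe_toFinset,
      Function.mem_support]
    intro h
    exact hi (hf i h)
  have fs : ∀ (f : (Fin r → ℕ) → ℝ), ∑ᶠ i, Z i * f i = ∑ i ∈ S, Z i * f i :=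
    fun f => fs2 _ (fun i h => by rw [h, zero_mul])
  have hNS : ∑ i ∈ S, Z i = N := by
    rw [hN]; exact (fs2 _ (fun i h => h)).symm
  set U : Finset (Finset (Fin r)) := Finset.univ.erase (∅ : Finset (Fin r)) with hUdef
  have hUne : ∀ u ∈ U, u.Nonempty := by
    intro u hu
    exact Finset.nonempty_iff_ne_empty.mpr (Finset.mem_erase.mp hu).1
  -- indicator notation
  set ι : Finset (Fin r) → (Fin r → ℕ) → (Fin r → ℕ) → ℝ :=
    fun u i i' => if ∀ j ∈ u, i j = i' j then 1 else 0 with hι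
  set c : (Fin r → ℕ) → (Fin r → ℕ) → ℕ :=
    fun i i' => (Finset.univ.filter (fun j => i j = i' j)).card with hc
  have csymm : ∀ i i', c i i' = c i' i := by
    intro i i'
    simp only [hc]
    congr 1
    apply Finset.filter_congr
    intro j _
    exact ⟨Eq.symm, Eq.symm⟩
  have ιsymm : ∀ u i i', ι u i i' = ι u i' i := by
    intro u i i'
    simp only [hι]
    have h : (∀ j ∈ u, i j = i' j) ↔ (∀ j ∈ u, i' j = i j) :=
      ⟨fun h j hj => (h j hj).symm, fun h j hj => (h j hj).symm⟩
    rw [if_congr h rfl rfl]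
  -- finset versions of ν definitions
  have hνiu' : ∀ i u, νiu i u = (1 / N) * ∑ a ∈ S, Z a * ι u i a := by
    intro i u; rw [hνiu i u, fs]
  have hνik' : ∀ i k, νik i k
      = (1 / N) * ∑ a ∈ S, Z a * (if c i a = k then (1:ℝ) else 0) := by
    intro i k; rw [hνik i k, fs]
  have hνiku' : ∀ i k u, νiku i k u
      = (1 / N) * ∑ a ∈ S, Z a * (if c i a = k ∧ ∀ j ∈ u, i j = a j then (1:ℝ) else 0) := by
    intro i k u; rw [hνiku i k u, fs]
  have hνkbar' : ∀ k, νkbar k = (1 / N) * ∑ i ∈ S, Z i * νik i k := by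
    intro k; rw [hνkbar k, fs]
  -- centered means of errors
  set εb : Finset (Fin r) → Ω → ℝ :=
    fun u ω => (1 / N) * ∑ a ∈ S, Z a * ε a u ω with hεb
  have L1 : ∀ i ω, X i ω - Xbar ω = ∑ u ∈ U, (ε i u ω - εb u ω) := by
    intro i ω
    have h1 : Xbar ω = μ + ∑ u ∈ U, εb u ω := by
      rw [hXbar, fs (fun a => X a ω)]
      have h2 : ∀ a ∈ S, Z a * X a ω = Z a * μ + ∑ u ∈ U, Z a * ε a u ω := by
        intro a _
        rw [hX a ω, mul_add, Finset.mul_sum]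
      rw [Finset.sum_congr rfl h2, Finset.sum_add_distrib, ← Finset.sum_mul,
        hNS, Finset.sum_comm, mul_add]
      congr 1
      · field_simp
      · rw [Finset.mul_sum]
    rw [hX i ω, h1, Finset.sum_sub_distrib]
    ring
  -- key covariance computation
  have key : ∀ u ∈ U, ∀ u' ∈ U, ∀ i i' : Fin r → ℕ,
      E (fun ω => (ε i u ω - εb u ω) * (ε i' u' ω - εb u' ω))
        = if u = u' then
            σ2 i u * ι u i i' - σ2 i u * νiu i u - σ2 i' u * νiu i' u
              + (1 / N ^ 2) * ∑ a ∈ S, ∑ b ∈ S, Z a * Z b * (σ2 a u * ι u a b)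
          else 0 := by
    intro u hu u' hu' i i'
    have hun := hUne u hu
    have hun' := hUne u' hu'
    have hsplit : (fun ω => (ε i u ω - εb u ω) * (ε i' u' ω - εb u' ω))
        = (fun ω => ε i u ω * ε i' u' ω) - (fun ω => ε i u ω * εb u' ω)
          - (fun ω => εb u ω * ε i' u' ω) + (fun ω => εb u ω * εb u' ω) := by
      funext ω
      simp only [Pi.add_apply, Pi.sub_apply]
      ring
    rw [hsplit, map_add, map_sub, map_sub]
    have h1 : E (fun ω => ε i u ω * ε i' u' ω)
        = if u = u' then σ2 i u * ι u i i' else 0 := by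
      rw [hcov i i' u u' hun hun']
      by_cases h : u = u'
      · subst h
        simp [hι]
      · simp [h]
    have h2 : E (fun ω => ε i u ω * εb u' ω)
        = if u = u' then σ2 i u * νiu i u else 0 := by
      have e1 : (fun ω => ε i u ω * εb u' ω)
          = fun ω => ∑ a ∈ S, (1 / N * Z a) * (ε i u ω * ε a u' ω) := by
        funext ω
        simp only [hεb, Finset.mul_sum, Finset.sum_mul]
        apply Finset.sum_congr rfl
        intro a _
        ring
      rw [e1, Esum' E]
      have e2 : ∀ a ∈ S, E (fun ω => (1 / N * Z a) * (ε i u ω * ε a u' ω))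
          = (1 / N * Z a) * (σ2 i u *
              (if u = u' ∧ ∀ j ∈ u, i j = a j then (1:ℝ) else 0)) := by
        intro a _
        rw [Esmul' E, hcov i a u u' hun hun']
      rw [Finset.sum_congr rfl e2]
      by_cases h : u = u'
      · subst h
        rw [if_pos rfl, hνiu' i u]
        simp only [hι, eq_self_iff_true, true_and, Finset.mul_sum]
        apply Finset.sum_congr rfl
        intro a _
        ring
      · simp [h]
    have h3 : E (fun ω => εb u ω * ε i' u' ω)
        = if u = u' then σ2 i' u * νiu i' u else 0 := by
      have e1 : (fun ω => εb u ω * ε i' u' ω)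
          = fun ω => ∑ b ∈ S, (1 / N * Z b) * (ε b u ω * ε i' u' ω) := by
        funext ω
        simp only [hεb, Finset.mul_sum, Finset.sum_mul]
        apply Finset.sum_congr rfl
        intro b _
        ring
      rw [e1, Esum' E]
      have e2 : ∀ b ∈ S, E (fun ω => (1 / N * Z b) * (ε b u ω * ε i' u' ω))
          = (1 / N * Z b) * (σ2 i' u *
              (if u = u' ∧ ∀ j ∈ u, b j = i' j then (1:ℝ) else 0)) := by
        intro b _
        rw [Esmul' E, hcov b i' u u' hun hun']
        by_cases h : u = u' ∧ ∀ j ∈ u, b j = i' j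
        · rw [hσdep b i' u h.2]
        · simp [h]
      rw [Finset.sum_congr rfl e2]
      by_cases h : u = u'
      · subst h
        rw [if_pos rfl, hνiu' i' u]
        simp only [hι, eq_self_iff_true, true_and, Finset.mul_sum]
        apply Finset.sum_congr rfl
        intro b _
        have hiff : (∀ j ∈ u, b j = i' j) ↔ (∀ j ∈ u, i' j = b j) :=
          ⟨fun h j hj => (h j hj).symm, fun h j hj => (h j hj).symm⟩
        rw [if_congr hiff rfl rfl]
        ring
      · simp [h]
    have h4 : E (fun ω => εb u ω * εb u' ω)
        = if u = u' then
            (1 / N ^ 2) * ∑ a ∈ S, ∑ b ∈ S, Z a * Z b * (σ2 a u * ι u a b)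
          else 0 := by
      have e1 : (fun ω => εb u ω * εb u' ω)
          = fun ω => ∑ a ∈ S, ∑ b ∈ S,
              (1 / N * Z a * (1 / N * Z b)) * (ε a u ω * ε b u' ω) := by
        funext ω
        simp only [hεb, Finset.mul_sum, Finset.sum_mul]
        rw [Finset.sum_comm]
        apply Finset.sum_congr rfl
        intro a _
        apply Finset.sum_congr rfl
        intro b _
        ring
      rw [e1, Esum' E]
      have e2 : ∀ a ∈ S,
          E (fun ω => ∑ b ∈ S, (1 / N * Z a * (1 / N * Z b)) * (ε a u ω * ε b u' ω))
          = ∑ b ∈ S, (1 / N * Z a * (1 / N * Z b)) * (σ2 a u *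
              (if u = u' ∧ ∀ j ∈ u, a j = b j then (1:ℝ) else 0)) := by
        intro a _
        rw [Esum' E]
        apply Finset.sum_congr rfl
        intro b _
        rw [Esmul' E, hcov a b u u' hun hun']
      rw [Finset.sum_congr rfl e2]
      by_cases h : u = u'
      · subst h
        rw [if_pos rfl]
        simp only [hι, eq_self_iff_true, true_and, Finset.mul_sum]
        apply Finset.sum_congr rfl
        intro a _
        apply Finset.sum_congr rfl
        intro b _
        ring
      · simp [h]
    rw [h1, h2, h3, h4]
    by_cases h : u = u'
    · simp [h]
    · simp [h]
  -- expectation of centered cross-product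
  have L2 : ∀ i i', E (fun ω => (X i ω - Xbar ω) * (X i' ω - Xbar ω))
      = ∑ u ∈ U, (σ2 i u * ι u i i' - σ2 i u * νiu i u - σ2 i' u * νiu i' u
          + (1 / N ^ 2) * ∑ a ∈ S, ∑ b ∈ S, Z a * Z b * (σ2 a u * ι u a b)) := by
    intro i i'
    have e1 : (fun ω => (X i ω - Xbar ω) * (X i' ω - Xbar ω))
        = fun ω => ∑ u ∈ U, ∑ u' ∈ U,
            (ε i u ω - εb u ω) * (ε i' u' ω - εb u' ω) := by
      funext ω
      rw [L1, L1, Finset.sum_mul_sum]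
    rw [e1, Esum' E]
    have e2 : ∀ u ∈ U,
        E (fun ω => ∑ u' ∈ U, (ε i u ω - εb u ω) * (ε i' u' ω - εb u' ω))
        = ∑ u' ∈ U, if u = u' then
            σ2 i u * ι u i i' - σ2 i u * νiu i u - σ2 i' u * νiu i' u
              + (1 / N ^ 2) * ∑ a ∈ S, ∑ b ∈ S, Z a * Z b * (σ2 a u * ι u a b)
          else 0 := by
      intro u hu
      rw [Esum' E]
      exact Finset.sum_congr rfl (fun u' hu' => key u hu u' hu' i i')
    rw [Finset.sum_congr rfl e2]
    apply Finset.sum_congr rfl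
    intro u hu
    rw [Finset.sum_ite_eq, if_pos hu]
  -- expand power as sum over k
  have hcle : ∀ i i' : Fin r → ℕ, c i i' ∈ Finset.range (r + 1) := by
    intro i i'
    refine Finset.mem_range.mpr (Nat.lt_succ_of_le ?_)
    calc c i i' ≤ Finset.univ.card := Finset.card_filter_le _ _
      _ = r := by simp
  have wexp : ∀ i i' : Fin r → ℕ, ((1 + τ2) : ℝ) ^ (c i i')
      = ∑ k ∈ Finset.range (r + 1), (1 + τ2) ^ k * (if c i i' = k then (1:ℝ) else 0) := by
    intro i i'
    have h1 : ∀ k ∈ Finset.range (r + 1),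
        (1 + τ2 : ℝ) ^ k * (if c i i' = k then (1:ℝ) else 0)
          = if c i i' = k then (1 + τ2 : ℝ) ^ k else 0 := by
      intro k _
      by_cases h : c i i' = k <;> simp [h]
    rw [Finset.sum_congr rfl h1, Finset.sum_ite_eq, if_pos (hcle i i')]
  -- convert the E-argument to finite sums
  have e0 : (fun ω => ∑ᶠ i, ∑ᶠ i', Z i * Z i' *
        (1 + τ2) ^ (Finset.univ.filter (fun j => i j = i' j)).card *
        ((X i ω - Xbar ω) * (X i' ω - Xbar ω)))
      = fun ω => ∑ i ∈ S, ∑ i' ∈ S, (Z i * Z i' * (1 + τ2) ^ (c i i')) *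
          ((X i ω - Xbar ω) * (X i' ω - Xbar ω)) := by
    funext ω
    have hout : ∀ i, Z i = 0 →
        (∑ᶠ i', Z i * Z i' *
          (1 + τ2) ^ (Finset.univ.filter (fun j => i j = i' j)).card *
          ((X i ω - Xbar ω) * (X i' ω - Xbar ω))) = 0 := by
      intro i h
      have hz : ∀ i' : Fin r → ℕ, Z i * Z i' *
          (1 + τ2) ^ (Finset.univ.filter (fun j => i j = i' j)).card *
          ((X i ω - Xbar ω) * (X i' ω - Xbar ω)) = 0 := by
        intro i'
        rw [h]
        ring
      rw [finsum_congr hz, finsum_zero]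
    rw [fs2 _ hout]
    apply Finset.sum_congr rfl
    intro i _
    rw [fs2 _ (fun i' h => by rw [h]; ring)]
  rw [e0]
  have e1 : E (fun ω => ∑ i ∈ S, ∑ i' ∈ S, (Z i * Z i' * (1 + τ2) ^ (c i i')) *
          ((X i ω - Xbar ω) * (X i' ω - Xbar ω)))
      = ∑ i ∈ S, ∑ i' ∈ S, (Z i * Z i' * (1 + τ2) ^ (c i i')) *
          (∑ u ∈ U, (σ2 i u * ι u i i' - σ2 i u * νiu i u - σ2 i' u * νiu i' u
            + (1 / N ^ 2) * ∑ a ∈ S, ∑ b ∈ S, Z a * Z b * (σ2 a u * ι u a b))) := by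
    rw [Esum' E]
    apply Finset.sum_congr rfl
    intro i _
    rw [Esum' E]
    apply Finset.sum_congr rfl
    intro i' _
    rw [Esmul' E, L2]
  rw [e1]
  have e3 : (1 / N) * ∑ u ∈ U, ∑ᶠ i, Z i * (γi i u * σ2 i u)
      = (1 / N) * ∑ u ∈ U, ∑ i ∈ S, Z i * (γi i u * σ2 i u) := by
    congr 1
    exact Finset.sum_congr rfl (fun u _ => fs _)
  rw [e3]
  -- move the u-sum outside
  have e4 : ∑ i ∈ S, ∑ i' ∈ S, (Z i * Z i' * (1 + τ2) ^ (c i i')) *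
          (∑ u ∈ U, (σ2 i u * ι u i i' - σ2 i u * νiu i u - σ2 i' u * νiu i' u
            + (1 / N ^ 2) * ∑ a ∈ S, ∑ b ∈ S, Z a * Z b * (σ2 a u * ι u a b)))
      = ∑ u ∈ U, ∑ i ∈ S, ∑ i' ∈ S, (Z i * Z i' * (1 + τ2) ^ (c i i')) *
          (σ2 i u * ι u i i' - σ2 i u * νiu i u - σ2 i' u * νiu i' u
            + (1 / N ^ 2) * ∑ a ∈ S, ∑ b ∈ S, Z a * Z b * (σ2 a u * ι u a b)) := by
    refine Eq.trans (Finset.sum_congr rfl fun i _ => Eq.trans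
      (Finset.sum_congr rfl fun i' _ => Finset.mul_sum _ _ _) Finset.sum_comm)
      Finset.sum_comm
  rw [e4, Finset.mul_sum, Finset.mul_sum]
  apply Finset.sum_congr rfl
  intro u hu
  -- per-u evaluations
  have nsum1 : ∀ i : Fin r → ℕ, ∑ i' ∈ S, Z i' * ((1 + τ2) ^ (c i i') * ι u i i')
      = ∑ k ∈ Finset.range (r + 1), (1 + τ2) ^ k * (N * νiku i k u) := by
    intro i
    have h1 : ∀ i' ∈ S, Z i' * ((1 + τ2) ^ (c i i') * ι u i i')
        = ∑ k ∈ Finset.range (r + 1), (1 + τ2) ^ k *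
            (Z i' * (if c i i' = k ∧ ∀ j ∈ u, i j = i' j then (1:ℝ) else 0)) := by
      intro i' _
      rw [wexp i i', Finset.sum_mul, Finset.mul_sum]
      apply Finset.sum_congr rfl
      intro k _
      by_cases ha : c i i' = k <;> by_cases hb : ∀ j ∈ u, i j = i' j <;>
        simp [ha, hb, hι] <;> ring
    rw [Finset.sum_congr rfl h1, Finset.sum_comm]
    apply Finset.sum_congr rfl
    intro k _
    rw [← Finset.mul_sum]
    congr 1
    rw [hνiku' i k u, ← mul_assoc, mul_one_div, div_self hNne, one_mul]
  have nsum2 : ∀ i : Fin r → ℕ, ∑ i' ∈ S, Z i' * (1 + τ2) ^ (c i i')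
      = ∑ k ∈ Finset.range (r + 1), (1 + τ2) ^ k * (N * νik i k) := by
    intro i
    have h1 : ∀ i' ∈ S, Z i' * (1 + τ2) ^ (c i i')
        = ∑ k ∈ Finset.range (r + 1), (1 + τ2) ^ k *
            (Z i' * (if c i i' = k then (1:ℝ) else 0)) := by
      intro i' _
      rw [wexp i i', Finset.mul_sum]
      apply Finset.sum_congr rfl
      intro k _
      by_cases ha : c i i' = k <;> simp [ha] <;> ring
    rw [Finset.sum_congr rfl h1, Finset.sum_comm]
    apply Finset.sum_congr rfl
    intro k _
    rw [← Finset.mul_sum]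
    congr 1
    rw [hνik' i k, ← mul_assoc, mul_one_div, div_self hNne, one_mul]
  have nsum4 : ∀ k, ∑ i ∈ S, Z i * νik i k = N * νkbar k := by
    intro k
    rw [hνkbar' k, ← mul_assoc, mul_one_div, div_self hNne, one_mul]
  have hCeq : (1 / N ^ 2) * ∑ a ∈ S, ∑ b ∈ S, Z a * Z b * (σ2 a u * ι u a b)
      = (1 / N) * ∑ a ∈ S, Z a * (σ2 a u * νiu a u) := by
    have h1 : ∀ a ∈ S, ∑ b ∈ S, Z a * Z b * (σ2 a u * ι u a b)
        = (Z a * σ2 a u) * (N * νiu a u) := by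
      intro a _
      rw [hνiu' a u,
        show N * (1 / N * ∑ b ∈ S, Z b * ι u a b) = ∑ b ∈ S, Z b * ι u a b from by
          rw [← mul_assoc, mul_one_div, div_self hNne, one_mul],
        Finset.mul_sum]
      apply Finset.sum_congr rfl
      intro b _
      ring
    rw [Finset.sum_congr rfl h1, Finset.mul_sum, Finset.mul_sum]
    apply Finset.sum_congr rfl
    intro a _
    field_simp
  -- evaluate the four pieces of the double sum
  have split : ∑ i ∈ S, ∑ i' ∈ S, (Z i * Z i' * (1 + τ2) ^ (c i i')) *
          (σ2 i u * ι u i i' - σ2 i u * νiu i u - σ2 i' u * νiu i' u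
            + (1 / N ^ 2) * ∑ a ∈ S, ∑ b ∈ S, Z a * Z b * (σ2 a u * ι u a b))
      = ((∑ i ∈ S, ∑ i' ∈ S, (Z i * Z i' * (1 + τ2) ^ (c i i')) * (σ2 i u * ι u i i'))
          - (∑ i ∈ S, ∑ i' ∈ S, (Z i * Z i' * (1 + τ2) ^ (c i i')) * (σ2 i u * νiu i u))
          - (∑ i ∈ S, ∑ i' ∈ S, (Z i * Z i' * (1 + τ2) ^ (c i i')) * (σ2 i' u * νiu i' u)))
          + (∑ i ∈ S, ∑ i' ∈ S, (Z i * Z i' * (1 + τ2) ^ (c i i')) *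
              ((1 / N ^ 2) * ∑ a ∈ S, ∑ b ∈ S, Z a * Z b * (σ2 a u * ι u a b))) := by
    simp only [mul_sub, mul_add, Finset.sum_sub_distrib, Finset.sum_add_distrib]
  have E1 : ∑ i ∈ S, ∑ i' ∈ S, (Z i * Z i' * (1 + τ2) ^ (c i i')) * (σ2 i u * ι u i i')
      = ∑ i ∈ S, (Z i * σ2 i u) *
          (∑ k ∈ Finset.range (r + 1), (1 + τ2) ^ k * (N * νiku i k u)) := by
    apply Finset.sum_congr rfl
    intro i _
    rw [← nsum1 i, Finset.mul_sum]
    apply Finset.sum_congr rfl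
    intro i' _
    ring
  have E2 : ∑ i ∈ S, ∑ i' ∈ S, (Z i * Z i' * (1 + τ2) ^ (c i i')) * (σ2 i u * νiu i u)
      = ∑ i ∈ S, (Z i * (σ2 i u * νiu i u)) *
          (∑ k ∈ Finset.range (r + 1), (1 + τ2) ^ k * (N * νik i k)) := by
    apply Finset.sum_congr rfl
    intro i _
    rw [← nsum2 i, Finset.mul_sum]
    apply Finset.sum_congr rfl
    intro i' _
    ring
  have E3 : ∑ i ∈ S, ∑ i' ∈ S, (Z i * Z i' * (1 + τ2) ^ (c i i')) * (σ2 i' u * νiu i' u)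
      = ∑ i ∈ S, (Z i * (σ2 i u * νiu i u)) *
          (∑ k ∈ Finset.range (r + 1), (1 + τ2) ^ k * (N * νik i k)) := by
    rw [Finset.sum_comm]
    apply Finset.sum_congr rfl
    intro i' _
    have h1 : ∀ a ∈ S, (Z a * Z i' * (1 + τ2) ^ (c a i')) * (σ2 i' u * νiu i' u)
        = (Z i' * (σ2 i' u * νiu i' u)) * (Z a * (1 + τ2) ^ (c i' a)) := by
      intro a _
      rw [csymm a i']
      ring
    rw [Finset.sum_congr rfl h1, ← Finset.mul_sum, nsum2 i']
  have E4 : ∑ i ∈ S, ∑ i' ∈ S, (Z i * Z i' * (1 + τ2) ^ (c i i')) *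
        ((1 / N ^ 2) * ∑ a ∈ S, ∑ b ∈ S, Z a * Z b * (σ2 a u * ι u a b))
      = ∑ i ∈ S, ((1 / N) * (Z i * (σ2 i u * νiu i u))) *
          (∑ k ∈ Finset.range (r + 1), (1 + τ2) ^ k * (N * (N * νkbar k))) := by
    have h1 : ∀ i ∈ S, ∑ i' ∈ S, (Z i * Z i' * (1 + τ2) ^ (c i i')) *
          ((1 / N ^ 2) * ∑ a ∈ S, ∑ b ∈ S, Z a * Z b * (σ2 a u * ι u a b))
        = (Z i * ((1 / N ^ 2) * ∑ a ∈ S, ∑ b ∈ S, Z a * Z b * (σ2 a u * ι u a b))) *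
            (∑ i' ∈ S, Z i' * (1 + τ2) ^ (c i i')) := by
      intro i _
      conv_rhs => rw [Finset.mul_sum]
      apply Finset.sum_congr rfl
      intro i' _
      ring
    rw [Finset.sum_congr rfl h1]
    have h2 : ∀ i ∈ S,
        (Z i * ((1 / N ^ 2) * ∑ a ∈ S, ∑ b ∈ S, Z a * Z b * (σ2 a u * ι u a b))) *
            (∑ i' ∈ S, Z i' * (1 + τ2) ^ (c i i'))
        = (Z i * ((1 / N) * ∑ a ∈ S, Z a * (σ2 a u * νiu a u))) *
            (∑ k ∈ Finset.range (r + 1), (1 + τ2) ^ k * (N * νik i k)) := by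
      intro i _
      rw [hCeq, nsum2 i]
    rw [Finset.sum_congr rfl h2]
    -- now swap and use nsum4
    have h3 : ∀ i ∈ S,
        (Z i * ((1 / N) * ∑ a ∈ S, Z a * (σ2 a u * νiu a u))) *
            (∑ k ∈ Finset.range (r + 1), (1 + τ2) ^ k * (N * νik i k))
        = ∑ k ∈ Finset.range (r + 1),
            (((1 / N) * ∑ a ∈ S, Z a * (σ2 a u * νiu a u)) * ((1 + τ2) ^ k * N)) *
              (Z i * νik i k) := by
      intro i _
      rw [Finset.mul_sum]
      apply Finset.sum_congr rfl
      intro k _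
      ring
    rw [Finset.sum_congr rfl h3, Finset.sum_comm]
    have h4 : ∀ k ∈ Finset.range (r + 1),
        ∑ i ∈ S, (((1 / N) * ∑ a ∈ S, Z a * (σ2 a u * νiu a u)) * ((1 + τ2) ^ k * N)) *
            (Z i * νik i k)
        = (((1 / N) * ∑ a ∈ S, Z a * (σ2 a u * νiu a u)) * ((1 + τ2) ^ k * N)) *
            (N * νkbar k) := by
      intro k _
      rw [← Finset.mul_sum, nsum4 k]
    rw [Finset.sum_congr rfl h4]
    have h5 : ∑ i ∈ S, ((1 / N) * (Z i * (σ2 i u * νiu i u))) *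
          (∑ k ∈ Finset.range (r + 1), (1 + τ2) ^ k * (N * (N * νkbar k)))
        = ∑ k ∈ Finset.range (r + 1),
            (((1 / N) * ∑ a ∈ S, Z a * (σ2 a u * νiu a u)) * ((1 + τ2) ^ k * N)) *
              (N * νkbar k) := by
      rw [← Finset.sum_mul, ← Finset.mul_sum, Finset.mul_sum]
      apply Finset.sum_congr rfl
      intro k _
      ring
    rw [h5]
  -- combine everything
  rw [split, E1, E2, E3, E4]
  rw [← Finset.sum_sub_distrib, ← Finset.sum_sub_distrib, ← Finset.sum_add_distrib,
    Finset.mul_sum, Finset.mul_sum]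
  apply Finset.sum_congr rfl
  intro i _
  rw [hγi i u]
  simp only [Finset.mul_sum, Finset.sum_mul, mul_sub, mul_add]
  rw [← Finset.sum_sub_distrib, ← Finset.sum_sub_distrib, ← Finset.sum_add_distrib]
  apply Finset.sum_congr rfl
  intro k _
  field_simp
  ring
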